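/- Let N be a stable phylogenetic network on X and let P₁, P₂ ∈ π⁻(N) be distinct. Then the union of P₁ and P₂ contains a subgraph that is a reticulation cycle of N if and only if the vertices Ψ_N(P₁) and Ψ_N(P₂) of U(N) are contained in two distinct but isomorphic subMUL-trees of U(N), i.e., there exist distinct non-root vertices a and b of U(N) such that U(N)_a and U(N)_b are isomorphic, Ψ_N(P₁) is a vertex of U(N)_a, and Ψ_N(P₂) is a vertex of U(N)_b. -/

import Mathlib

/- ------------------------------------------------------------------
Common combinatorial framework for phylogenetic networks, MUL-trees,
un-fold and fold-up operations, following Huber--Moulton--Scornavacca--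
Steel and the paper "Three applications of un-fold/fold-up operations
for stable phylogenetic networks".

A `Net` is a rooted directed multigraph: `arcs u v` records the number
of parallel arcs from `u` to `v`.  Directed walks are recorded as lists
of *arc tokens* `(u, v, i)` (the `i`-th parallel arc from `u` to `v`),
so that parallel arcs give rise to different directed paths.
------------------------------------------------------------------- -/

open Classical

universe u v w

namespace Phylo

/-- A rooted directed multigraph on the vertex type `V`:  `arcs u v` is the
number of parallel arcs from `u` to `v`, `verts` is the vertex set and
`root` the root. -/
structure Net (V : Type u) where
  verts : Set V
  arcs : V → V → ℕ
  root : V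

/-- An arc token: `(u, v, i)` stands for the `i`-th parallel arc from `u` to `v`. -/
abbrev Arc (V : Type u) := V × V × ℕ

namespace Net

variable {V : Type u}

/-- The arc token `a` is a genuine arc of `N`. -/
def okArc (N : Net V) (a : Arc V) : Prop :=
  a.1 ∈ N.verts ∧ a.2.1 ∈ N.verts ∧ a.2.2 < N.arcs a.1 a.2.1

/-- `l` is a directed walk (possibly trivial) starting at the vertex `u`,
recorded as the list of its arc tokens. -/
def WalkFrom (N : Net V) (u : V) (l : List (Arc V)) : Prop :=
  u ∈ N.verts ∧ (∀ a ∈ l, N.okArc a) ∧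
    List.Chain' (fun a b : Arc V => a.2.1 = b.1) l ∧
    ∀ a ∈ l.head?, (a : Arc V).1 = u

/-- The end vertex of the walk `l` starting at `u`. -/
def endOf (u : V) (l : List (Arc V)) : V := (l.getLastD (u, u, 0)).2.1

/-- The list of vertices visited by a walk `l` starting at `u`. -/
def walkVerts (u : V) (l : List (Arc V)) : List V := u :: l.map (fun a => a.2.1)

/-- The inner (non-endpoint) vertices of a walk `l` starting at `u`. -/
def innerVerts (u : V) (l : List (Arc V)) : List V := ((walkVerts u l).dropLast).drop 1

/-- `w` is *below* `u` (there is a directed path from `u` to `w`; every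
vertex is below itself).  Equivalently, `u` is an *ancestor* of `w`. -/
def Reaches (N : Net V) (u w : V) : Prop := ∃ l, N.WalkFrom u l ∧ endOf u l = w

/-- The indegree of a vertex (counting parallel arcs). -/
noncomputable def inDeg (N : Net V) (v : V) : ℕ := ∑ᶠ u, N.arcs u v

/-- The outdegree of a vertex (counting parallel arcs). -/
noncomputable def outDeg (N : Net V) (v : V) : ℕ := ∑ᶠ u, N.arcs v u

/-- A leaf is a vertex of outdegree zero. -/
def IsLeaf (N : Net V) (v : V) : Prop := v ∈ N.verts ∧ N.outDeg v = 0

/-- An interior vertex is a non-leaf vertex. -/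
def IsInterior (N : Net V) (v : V) : Prop := v ∈ N.verts ∧ N.outDeg v ≠ 0

/-- A tree vertex is a vertex of indegree at most one. -/
def IsTreeVert (N : Net V) (v : V) : Prop := v ∈ N.verts ∧ N.inDeg v ≤ 1

/-- A hybrid vertex is a vertex of indegree at least two. -/
def IsHybrid (N : Net V) (v : V) : Prop := v ∈ N.verts ∧ 2 ≤ N.inDeg v

/-- The one-step arc relation. -/
def ArcRel (N : Net V) (u v : V) : Prop := 0 < N.arcs u v

/-- `N` contains no directed cycle. -/
def Acyclic (N : Net V) : Prop := ∀ v, ¬ Relation.TransGen N.ArcRel v v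

/-- A rooted connected pseudoDAG: a finite rooted directed (multi)graph with
no directed cycles in which every vertex is reachable from the root. -/
structure IsPseudoDAG (N : Net V) : Prop where
  finite : N.verts.Finite
  rootMem : N.root ∈ N.verts
  arcMem : ∀ u v, N.arcs u v ≠ 0 → u ∈ N.verts ∧ v ∈ N.verts
  acyclic : N.Acyclic
  connected : ∀ v ∈ N.verts, N.Reaches N.root v

/-- An `X`-network: a rooted connected pseudoDAG whose leaf set is `X`, where
the root has indegree zero, every non-leaf tree vertex has outdegree two,
every hybrid vertex has outdegree one, and every leaf has total degree one. -/
structure IsXNetwork (N : Net V) (X : Set V) extends IsPseudoDAG N : Prop where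
  rootInDeg : N.inDeg N.root = 0
  leafSet : ∀ v, N.IsLeaf v ↔ v ∈ X
  treeOutDeg : ∀ v ∈ N.verts, N.inDeg v ≤ 1 → N.outDeg v ≠ 0 → N.outDeg v = 2
  hybridOutDeg : ∀ v ∈ N.verts, 2 ≤ N.inDeg v → N.outDeg v = 1
  leafInDeg : ∀ v ∈ X, N.inDeg v = 1

/-- No parallel arcs. -/
def NoParallel (N : Net V) : Prop := ∀ u v, N.arcs u v ≤ 1

/-- A phylogenetic network on `X`: an `X`-network without parallel arcs. -/
structure IsPhyloNetwork (N : Net V) (X : Set V) extends IsXNetwork N X : Prop where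
  noParallel : N.NoParallel

/-- A phylogenetic tree on `X`: a phylogenetic network with no hybrid vertices. -/
structure IsPhyloTree (N : Net V) (X : Set V) extends IsPhyloNetwork N X : Prop where
  noHybrid : ∀ v, ¬ N.IsHybrid v

/-- A vertex with indegree one and outdegree one (to be suppressed). -/
def Suppressible (N : Net V) (v : V) : Prop :=
  v ∈ N.verts ∧ N.inDeg v = 1 ∧ N.outDeg v = 1

/-- The graph obtained from `N` by suppressing all vertices of indegree one and
outdegree one: kept vertices are the non-suppressible ones, and the number of
arcs from `u` to `w` is the number of directed paths from `u` to `w` in `N`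
all of whose inner vertices are suppressible. -/
noncomputable def suppr (N : Net V) : Net V where
  verts := {v ∈ N.verts | ¬ N.Suppressible v}
  arcs := fun u w =>
    if u ∈ N.verts ∧ ¬ N.Suppressible u ∧ w ∈ N.verts ∧ ¬ N.Suppressible w then
      Set.ncard {l : List (Arc V) | N.WalkFrom u l ∧ l ≠ [] ∧ endOf u l = w ∧
        ∀ x ∈ innerVerts u l, N.Suppressible x}
    else 0
  root := N.root

/-- `g` realizes an isomorphism of rooted multigraphs from `N` to `N'`. -/
def NetIsoVia {W : Type w} (N : Net V) (N' : Net W) (g : V → W) : Prop :=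
  Set.BijOn g N.verts N'.verts ∧
    (∀ u ∈ N.verts, ∀ v ∈ N.verts, N'.arcs (g u) (g v) = N.arcs u v) ∧
    g N.root = N'.root

/-- `w` is a vertex-stable ancestor of the leaf `x`: `w` is an interior vertex
lying on every directed path from the root to `x`. -/
def IsVSAncestor (N : Net V) (w x : V) : Prop :=
  N.IsInterior w ∧ N.IsLeaf x ∧
    ∀ l, N.WalkFrom N.root l → endOf N.root l = x → w ∈ walkVerts N.root l

/-- `N` is tree-child: every interior vertex has a child that is a tree vertex. -/
def TreeChild (N : Net V) : Prop :=
  ∀ v, N.IsInterior v → ∃ u, 0 < N.arcs v u ∧ N.IsTreeVert u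

/-- `N` is compressed: no arc has both its tail and its head hybrid. -/
def Compressed (N : Net V) : Prop :=
  ∀ u v, 0 < N.arcs u v → ¬(N.IsHybrid u ∧ N.IsHybrid v)

/-- `N` is reticulation-visible: every hybrid vertex is a vertex-stable
ancestor of some leaf. -/
def RetVisible (N : Net V) (X : Set V) : Prop :=
  ∀ h, N.IsHybrid h → ∃ x ∈ X, N.IsVSAncestor h x

/-- The set of arc tokens used by a walk. -/
def arcsOf (l : List (Arc V)) : Set (Arc V) := {a | a ∈ l}

/-- The union of the directed paths `p₁` and `p₂` contains a subgraph that is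
a reticulation cycle of `N`, i.e. the union of two arc-disjoint non-trivial
directed paths of `N` with the same start vertex and the same end vertex. -/
def ContainsRetCycle (N : Net V) (p₁ p₂ : List (Arc V)) : Prop :=
  ∃ (q₁ q₂ : List (Arc V)) (s e : V),
    N.WalkFrom s q₁ ∧ N.WalkFrom s q₂ ∧ q₁ ≠ [] ∧ q₂ ≠ [] ∧
    endOf s q₁ = e ∧ endOf s q₂ = e ∧
    Disjoint (arcsOf q₁) (arcsOf q₂) ∧
    arcsOf q₁ ∪ arcsOf q₂ ⊆ arcsOf p₁ ∪ arcsOf p₂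

/-- The set of vertices having a descendant in `Y`. -/
def keepSet (N : Net V) (Y : Set V) : Set V := {v ∈ N.verts | ∃ y ∈ Y, N.Reaches v y}

/-- The result of the leaf-removing operations applied to all leaves outside
`Y`: restrict to the vertices having a descendant in `Y` and suppress all
resulting vertices of indegree one and outdegree one. -/
noncomputable def restrictNet (N : Net V) (Y : Set V) : Net V :=
  Net.suppr
    { verts := N.keepSet Y
      arcs := fun u w => if u ∈ N.keepSet Y ∧ w ∈ N.keepSet Y then N.arcs u w else 0
      root := N.root }

end Net

/-- A labelled rooted directed multigraph: the data of a MUL-tree on the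
label set: `lab x` is the set of leaves labelled `x`. -/
structure LNet (V : Type u) (L : Type v) extends Net V where
  lab : L → Set V

namespace LNet

variable {V : Type u} {L : Type v}

/-- `M` is a MUL-tree on `X`: a rooted tree whose root has indegree `0`, with
no vertex of indegree one and outdegree one, in which every leaf carries
exactly one label from `X` and every label of `X` occurs. -/
structure IsMulTree (M : LNet V L) (X : Set L) : Prop where
  pseudo : M.toNet.IsPseudoDAG
  rootInDeg : M.toNet.inDeg M.root = 0
  inDegOne : ∀ v ∈ M.verts, v ≠ M.root → M.toNet.inDeg v = 1
  noSupp : ∀ v, ¬ M.toNet.Suppressible v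
  labLeaf : ∀ x ∈ X, ∀ l ∈ M.lab x, M.toNet.IsLeaf l
  labNonempty : ∀ x ∈ X, (M.lab x).Nonempty
  labCover : ∀ l, M.toNet.IsLeaf l → ∃! x, x ∈ X ∧ l ∈ M.lab x
  labOff : ∀ x, x ∉ X → M.lab x = ∅

/-- The set of vertices below `v`. -/
def belowSet (M : LNet V L) (v : V) : Set V := {w | M.toNet.Reaches v w}

/-- The subMUL-tree `M_v` of `M` rooted at the vertex `v` (delete the incoming
arc of `v` and restrict the labelling). -/
noncomputable def subAt (M : LNet V L) (v : V) : LNet V L where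
  verts := M.belowSet v
  arcs := fun u w => if u ∈ M.belowSet v ∧ w ∈ M.belowSet v then M.arcs u w else 0
  root := v
  lab := fun x => M.lab x ∩ M.belowSet v

/-- `η` realizes an isomorphism of MUL-trees (same label type). -/
def MulIsoVia {V' : Type w} (M : LNet V L) (M' : LNet V' L) (η : V → V') : Prop :=
  Set.BijOn η M.verts M'.verts ∧
    (∀ u ∈ M.verts, ∀ w ∈ M.verts, M'.arcs (η u) (η w) = M.arcs u w) ∧
    η M.root = M'.root ∧
    ∀ x : L, η '' (M.lab x ∩ M.verts) = M'.lab x ∩ M'.verts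

/-- Two labelled trees (on the same label type) are isomorphic. -/
def MulIso {V' : Type w} (M : LNet V L) (M' : LNet V' L) : Prop := ∃ η, MulIsoVia M M' η

/-- `η` realizes an isomorphism of MUL-trees on `X` modulo the label
translation `e`. -/
def MulIsoRelVia {V' : Type w} {L' : Type*} (M : LNet V L) (X : Set L)
    (M' : LNet V' L') (e : L → L') (η : V → V') : Prop :=
  Set.BijOn η M.verts M'.verts ∧
    (∀ u ∈ M.verts, ∀ w ∈ M.verts, M'.arcs (η u) (η w) = M.arcs u w) ∧
    η M.root = M'.root ∧
    ∀ x ∈ X, η '' (M.lab x ∩ M.verts) = M'.lab (e x) ∩ M'.verts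

/-- The equivalence relation `∼`: `u ∼ w` iff `u = w` or the subMUL-trees
`M_u` and `M_w` are isomorphic. -/
def Sim (M : LNet V L) (u w : V) : Prop := u = w ∨ MulIso (M.subAt u) (M.subAt w)

/-- The `∼`-equivalence class of `w`; the map `eqClass M : V(M) → V(M)/∼`
plays the role of the projection `p_M` onto the quotient. -/
def eqClass (M : LNet V L) (w : V) : Set V := {u ∈ M.verts | M.Sim u w}

/-- The quotient `V(M)/∼`, realized as the set of `∼`-equivalence classes. -/
def classSet (M : LNet V L) : Set (Set V) := M.eqClass '' M.verts

/-- `c` is a `∼`-equivalence class of `M`. -/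
def IsClassOf (M : LNet V L) (c : Set V) : Prop := ∃ w ∈ M.verts, c = M.eqClass w

/-- The class `c` gets a hybrid vertex above it in the fold-up of `M`:
some (equivalently, any) member of `c` has its parent in a strictly smaller
`∼`-class. -/
def ClassHyb (M : LNet V L) (c : Set V) : Prop :=
  ∃ w ∈ M.verts, c = M.eqClass w ∧ ∃ u, 0 < M.arcs u w ∧ (M.eqClass u).ncard < c.ncard

/-- `d` is the class of a parent of a member of `c`. -/
def IsParentClassOf (M : LNet V L) (d c : Set V) : Prop :=
  ∃ u w, 0 < M.arcs u w ∧ d = M.eqClass u ∧ c = M.eqClass w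

/-- The number of children inside `c` of a member of `d`. -/
noncomputable def childMult (M : LNet V L) (d c : Set V) : ℕ :=
  sSup {n : ℕ | ∃ u ∈ d, n = ∑ᶠ w ∈ c, M.arcs u w}

/-- The fold-up `F(M)` of the MUL-tree `M`: the `X`-network obtained by
repeatedly identifying all maximal inextendible subMUL-trees, subdividing
the incoming arcs of their roots and identifying the subdivision vertices.
Concretely, its tree vertices are the `∼`-classes of `M`, there is a hybrid
vertex above each class whose members have parents in a strictly smaller
class, and arcs are induced by the arcs of `M`. -/
noncomputable def foldUp (M : LNet V L) : Net (Set V ⊕ Set V) where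
  verts := (Sum.inl '' {c | M.IsClassOf c}) ∪
    (Sum.inr '' {c | M.IsClassOf c ∧ M.ClassHyb c})
  arcs := fun a b =>
    match a, b with
    | Sum.inl d, Sum.inl c =>
        if M.IsClassOf d ∧ M.IsClassOf c ∧ ¬ M.ClassHyb c ∧ M.IsParentClassOf d c
        then 1 else 0
    | Sum.inl d, Sum.inr c =>
        if M.IsClassOf d ∧ M.IsClassOf c ∧ M.ClassHyb c ∧ M.IsParentClassOf d c
        then M.childMult d c else 0
    | Sum.inr c, Sum.inl c' =>
        if c' = c ∧ M.IsClassOf c ∧ M.ClassHyb c then 1 else 0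
    | Sum.inr _, Sum.inr _ => 0
  root := Sum.inl (M.eqClass M.root)

/-- The `∼`-class of the leaves labelled `x`. -/
def labClass (M : LNet V L) (x : L) : Set V := {w ∈ M.verts | ∃ l ∈ M.lab x, M.Sim w l}

/-- The leaf set of the fold-up of `M`, identified with `X`. -/
def foldX (M : LNet V L) (X : Set L) : Set (Set V ⊕ Set V) :=
  (fun x => Sum.inl (M.labClass x)) '' X

/-- A MUL-tree is sound if its fold-up is a phylogenetic network. -/
def IsSound (M : LNet V L) (X : Set L) : Prop :=
  M.IsMulTree X ∧ Net.IsPhyloNetwork M.foldUp (M.foldX X)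

/-- An `X`-set of `M`: a set of leaves containing exactly one leaf labelled
`x` for every `x ∈ X`. -/
def IsXSet (M : LNet V L) (X : Set L) (C : Set V) : Prop :=
  (∀ l ∈ C, M.toNet.IsLeaf l) ∧ ∀ x ∈ X, ∃! l, l ∈ C ∧ l ∈ M.lab x

/-- `r` is the last common ancestor of the elements of `C`. -/
def IsLca (M : LNet V L) (r : V) (C : Set V) : Prop :=
  r ∈ M.verts ∧ (∀ c ∈ C, M.toNet.Reaches r c) ∧
    ∀ r' ∈ M.verts, (∀ c ∈ C, M.toNet.Reaches r' c) → M.toNet.Reaches r' r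

/-- The last common ancestor `r_C` of the elements of `C`. -/
noncomputable def lcaOf [Nonempty V] (M : LNet V L) (C : Set V) : V :=
  Classical.epsilon fun r => M.IsLca r C

/-- The vertex set of `M_C⁺`: all vertices on a directed path from
`lca(C)` to a leaf in `C`. -/
def subPlusVerts [Nonempty V] (M : LNet V L) (C : Set V) : Set V :=
  {v | M.toNet.Reaches (M.lcaOf C) v ∧ ∃ c ∈ C, M.toNet.Reaches v c}

/-- The tree `M_C⁺` spanned by the leaves in `C`; the canonical injection
`ξ_C⁺ : V(M_C⁺) → V(M)` is the set-inclusion `subPlusVerts M C ⊆ V`, so that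
the map `ξ̄_C⁺ = p_M ∘ ξ_C⁺` is realized by `eqClass M` restricted to
`subPlusVerts M C`. -/
noncomputable def subPlus [Nonempty V] (M : LNet V L) (C : Set V) : Net V where
  verts := M.subPlusVerts C
  arcs := fun u w => if u ∈ M.subPlusVerts C ∧ w ∈ M.subPlusVerts C then M.arcs u w else 0
  root := M.lcaOf C

/-- The phylogenetic tree `M_C` induced by the `X`-set `C`: suppress all
vertices of indegree one and outdegree one in `M_C⁺`. -/
noncomputable def mC [Nonempty V] (M : LNet V L) (C : Set V) : Net V := (M.subPlus C).suppr

/-- The set `V(M)^C`: the vertex `r_C` together with all vertices `v` such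
that no vertex below `v` is `∼`-equivalent to `r_C`. -/
def vmc [Nonempty V] (M : LNet V L) (C : Set V) : Set V :=
  insert (M.lcaOf C) {v ∈ M.verts | ∀ u, M.toNet.Reaches v u → ¬ M.Sim u (M.lcaOf C)}

/-- Vertices of `M` having a descendant leaf labelled by an element of `Y`. -/
def keepSet (M : LNet V L) (Y : Set L) : Set V :=
  {v ∈ M.verts | ∃ w, M.toNet.Reaches v w ∧ ∃ y ∈ Y, w ∈ M.lab y}

/-- The MUL-tree `M_Y` obtained from `M` by the leaf-removing operation:
remove all leaves labelled outside `Y` (together with everything having no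
leaf labelled in `Y` below it) and suppress all resulting vertices of
indegree one and outdegree one. -/
noncomputable def restrictMul (M : LNet V L) (Y : Set L) : LNet V L where
  toNet := Net.suppr
    { verts := M.keepSet Y
      arcs := fun u w => if u ∈ M.keepSet Y ∧ w ∈ M.keepSet Y then M.arcs u w else 0
      root := M.root }
  lab := fun y => if y ∈ Y then M.lab y else ∅

end LNet

namespace Net

variable {V : Type u}

/-- The vertex set of the un-fold `U(N)` of `N`: the set `π⁻(N)` of directed
paths of `N` starting at the root and ending in a tree vertex.  (The
bijection `Ψ_N : π⁻(N) → V(U(N))` is thereby realized as the identity.) -/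
def unfoldVerts (N : Net V) : Set (List (Arc V)) :=
  {p | N.WalkFrom N.root p ∧ N.IsTreeVert (endOf N.root p)}

/-- The un-fold `U(N)` of `N`, a MUL-tree on `X`: vertices are the directed
paths from the root ending in tree vertices, arcs correspond to extending
such a path by a single arc followed by a (possibly empty) run of hybrid
vertices, and the leaves labelled `x ∈ X` are the paths ending in `x`. -/
noncomputable def unfoldNet (N : Net V) (X : Set V) : LNet (List (Arc V)) V where
  verts := unfoldVerts N
  arcs := fun p q =>
    if p ∈ unfoldVerts N ∧ q ∈ unfoldVerts N ∧
        ∃ r, r ≠ [] ∧ q = p ++ r ∧ ∀ a ∈ r.dropLast, N.IsHybrid (a : Arc V).2.1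
    then 1 else 0
  root := []
  lab := fun x => if x ∈ X then {p ∈ unfoldVerts N | endOf N.root p = x} else ∅

end Net

/-- `N` is a stable phylogenetic network on `X`: `N` is a phylogenetic
network isomorphic to the fold-up of its un-fold, via an isomorphism fixing
`X` pointwise (i.e. sending each leaf `x` to the leaf of `F(U(N))`
corresponding to `x`). -/
def IsStable {V : Type u} (N : Net V) (X : Set V) : Prop :=
  Net.IsPhyloNetwork N X ∧
    ∃ g, Net.NetIsoVia N (Net.unfoldNet N X).foldUp g ∧
      ∀ x ∈ X, g x = Sum.inl ((Net.unfoldNet N X).labClass x)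

/-- `T` is endorsed by the MUL-tree `M` via the `X`-set `C`, the isomorphism
`T ≅ M_C` being realized by `σ` (which sends each `x ∈ X` to the unique leaf
of `C` labelled `x`). -/
def EndorsedVia {V : Type u} {W : Type w} [Nonempty W] (T : Net V) (X : Set V)
    (M : LNet W V) (C : Set W) (σ : V → W) : Prop :=
  M.IsXSet X C ∧ Net.NetIsoVia T (M.mC C) σ ∧ ∀ x ∈ X, σ x ∈ C ∧ σ x ∈ M.lab x

/-- `T` is endorsed by the MUL-tree `M` via the `X`-set `C`. -/
def Endorsed {V : Type u} {W : Type w} [Nonempty W] (T : Net V) (X : Set V)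
    (M : LNet W V) (C : Set W) : Prop :=
  ∃ σ, EndorsedVia T X M C σ

/-- `N'` is a subgraph of `N` with leaf set `X` which is (an isomorphic copy,
via the identity on `X`, of) a subdivision of `T`: suppressing all vertices
of indegree one and outdegree one in `N'` yields a tree isomorphic to `T`
via an isomorphism `g` fixing `X` pointwise. -/
def IsDisplayWitness {V : Type u} (N : Net V) (X : Set V) (T : Net V)
    (N' : Net V) (g : V → V) : Prop :=
  N'.verts ⊆ N.verts ∧ (∀ u v, N'.arcs u v ≤ N.arcs u v) ∧
    N'.root ∈ N'.verts ∧ (∀ v ∈ N'.verts, N'.Reaches N'.root v) ∧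
    (∀ v, N'.IsLeaf v ↔ v ∈ X) ∧
    Net.NetIsoVia T N'.suppr g ∧ ∀ x ∈ X, g x = x

/-- The phylogenetic tree `T` is displayed by `N`. -/
def Displays {V : Type u} (N : Net V) (X : Set V) (T : Net V) : Prop :=
  ∃ N' g, IsDisplayWitness N X T N' g

/-- The phylogenetic tree `T` is strongly displayed by `N`: it is displayed
via a subdivision whose root is the root of `N`. -/
def StronglyDisplays {V : Type u} (N : Net V) (X : Set V) (T : Net V) : Prop :=
  ∃ N' g, IsDisplayWitness N X T N' g ∧ N'.root = N.root

/-- `G` is a rooted tree. -/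
structure IsRootedTree {V : Type u} (G : Net V) : Prop where
  pseudo : G.IsPseudoDAG
  rootInDeg : G.inDeg G.root = 0
  inDegOne : ∀ v ∈ G.verts, v ≠ G.root → G.inDeg v = 1

/-- `T'` is a subdivision of `T` (with the identity on `X`): `T'` is a rooted
tree which, after suppressing all vertices of indegree one and outdegree one,
is isomorphic to `T` via an isomorphism fixing `X` pointwise. -/
def IsSubdivisionOf {V : Type u} (T' T : Net V) (X : Set V) : Prop :=
  IsRootedTree T' ∧ ∃ g, Net.NetIsoVia T T'.suppr g ∧ ∀ x ∈ X, g x = x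

/-- `T` is a base tree for `N`: `N` can be obtained from `T` by subdividing
some arcs of `T`, adding arcs between the subdivision vertices without
creating parallel arcs or directed cycles, and suppressing all subdivision
vertices still of indegree one and outdegree one. -/
def IsBaseTreeFor {V : Type u} (T : Net V) (X : Set V) (N : Net V) : Prop :=
  ∃ T' G : Net V,
    IsSubdivisionOf T' T X ∧
    G.verts = T'.verts ∧ G.root = T'.root ∧
    (∀ u v, T'.arcs u v ≤ G.arcs u v) ∧
    (∀ u v, T'.arcs u v ≠ G.arcs u v → T'.Suppressible u ∧ T'.Suppressible v) ∧
    G.NoParallel ∧ G.Acyclic ∧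
    ∃ h, Net.NetIsoVia G.suppr N h ∧ ∀ x ∈ X, h x = x

end Phylo
namespace Phylo

/-! ### Auxiliary lemmas: basic walk combinatorics -/

namespace Net

variable {V : Type u} {N : Net V}

lemma endOf_nil (u : V) : endOf u ([] : List (Arc V)) = u := rfl

lemma endOf_cons (u : V) (a : Arc V) (l : List (Arc V)) :
    endOf u (a :: l) = endOf a.2.1 l := by
  cases l with
  | nil => rfl
  | cons b t =>
    show ((b :: t).getLastD (u, u, 0)).2.1 = ((b :: t).getLastD (a.2.1, a.2.1, 0)).2.1
    rw [List.getLastD_eq_getLast?, List.getLastD_eq_getLast?]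
    cases h : (b :: t).getLast? with
    | none => exact absurd h (by simp)
    | some x => simp

lemma endOf_append (u : V) (l₁ l₂ : List (Arc V)) :
    endOf u (l₁ ++ l₂) = endOf (endOf u l₁) l₂ := by
  induction l₁ generalizing u with
  | nil => rfl
  | cons a t ih => simp [endOf_cons, ih]

lemma walkFrom_nil {u : V} : N.WalkFrom u [] ↔ u ∈ N.verts := by
  simp [WalkFrom, List.Chain', List.isChain_nil]

lemma walkFrom_cons {u : V} {a : Arc V} {l : List (Arc V)} :
    N.WalkFrom u (a :: l) ↔ a.1 = u ∧ u ∈ N.verts ∧ N.okArc a ∧ N.WalkFrom a.2.1 l := by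
  constructor
  · rintro ⟨hu, hok, hch, hhd⟩
    have ha : N.okArc a := hok a (by simp)
    refine ⟨hhd a rfl, hu, ha, ha.2.1, fun b hb => hok b (by simp [hb]), ?_, ?_⟩
    · exact (List.isChain_cons.1 hch).2
    · intro b hb; exact ((List.isChain_cons.1 hch).1 b hb).symm
  · rintro ⟨h1, h2, h3, h4, h5, h6, h7⟩
    refine ⟨h2, ?_, ?_, ?_⟩
    · intro b hb
      rcases List.mem_cons.1 hb with rfl | hb
      · exact h3
      · exact h5 b hb
    · exact List.isChain_cons.2 ⟨fun y hy => (h7 y hy).symm, h6⟩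
    · intro b hb; simp at hb; subst hb; exact h1

lemma walkFrom_append {u : V} {l₁ l₂ : List (Arc V)} :
    N.WalkFrom u (l₁ ++ l₂) ↔ N.WalkFrom u l₁ ∧ N.WalkFrom (endOf u l₁) l₂ := by
  induction l₁ generalizing u with
  | nil =>
    simp only [List.nil_append, endOf_nil]
    exact ⟨fun h => ⟨walkFrom_nil.2 h.1, h⟩, fun h => h.2⟩
  | cons a t ih =>
    simp only [List.cons_append, walkFrom_cons, endOf_cons, ih]
    tauto

lemma WalkFrom.take {u : V} {l : List (Arc V)} (h : N.WalkFrom u l) (n : ℕ) :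
    N.WalkFrom u (l.take n) := by
  rw [← List.take_append_drop n l] at h
  exact (walkFrom_append.1 h).1

lemma WalkFrom.endMem {u : V} {l : List (Arc V)} (h : N.WalkFrom u l) :
    endOf u l ∈ N.verts := by
  induction l generalizing u with
  | nil => exact h.1
  | cons a t ih =>
    rw [walkFrom_cons] at h
    rw [endOf_cons]
    exact ih h.2.2.2

/-- The vertex at position `i` of the walk `l` starting at `u`. -/
def vertAt (u : V) (l : List (Arc V)) (i : ℕ) : V := endOf u (l.take i)

lemma vertAt_zero (u : V) (l : List (Arc V)) : vertAt u l 0 = u := rfl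

lemma vertAt_length (u : V) (l : List (Arc V)) : vertAt u l l.length = endOf u l := by
  simp [vertAt]

lemma vertAt_of_length_le (u : V) (l : List (Arc V)) {i : ℕ} (h : l.length ≤ i) :
    vertAt u l i = endOf u l := by
  simp [vertAt, List.take_of_length_le h]

lemma vertAt_take (u : V) (l : List (Arc V)) {i n : ℕ} (h : i ≤ n) :
    vertAt u (l.take n) i = vertAt u l i := by
  simp [vertAt, List.take_take, min_eq_left h]

lemma vertAt_drop (u : V) (l : List (Arc V)) (k i : ℕ) :
    vertAt (vertAt u l k) (l.drop k) i = vertAt u l (k + i) := by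
  simp only [vertAt, List.take_add, endOf_append]

lemma vertAt_succ_get (u : V) {l : List (Arc V)} {p : ℕ} (hp : p < l.length) :
    vertAt u l (p + 1) = (l.get ⟨p, hp⟩).2.1 := by
  have : l.take (p + 1) = l.take p ++ [l.get ⟨p, hp⟩] := by
    rw [List.take_succ, List.getElem?_eq_getElem hp]
    simp [List.get_eq_getElem]
  rw [vertAt, this, endOf_append]
  rfl

lemma vertAt_get_fst {u : V} {l : List (Arc V)} (hw : N.WalkFrom u l) {p : ℕ}
    (hp : p < l.length) : (l.get ⟨p, hp⟩).1 = vertAt u l p := by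
  induction l generalizing u p with
  | nil => simp at hp
  | cons a t ih =>
    rw [walkFrom_cons] at hw
    cases p with
    | zero => simpa [vertAt_zero] using hw.1
    | succ q =>
      have hq : q < t.length := by simpa using hp
      have := ih hw.2.2.2 hq
      simp only [List.get_cons_succ]
      rw [this]
      show vertAt a.2.1 t q = vertAt u (a :: t) (q + 1)
      simp [vertAt, List.take_cons, endOf_cons]

lemma vertAt_mem {u : V} {l : List (Arc V)} (hw : N.WalkFrom u l) {i : ℕ}
    (hi : i ≤ l.length) : vertAt u l i ∈ N.verts :=
  (hw.take i).endMem

lemma WalkFrom.drop' {u : V} {l : List (Arc V)} (h : N.WalkFrom u l) (n : ℕ) :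
    N.WalkFrom (vertAt u l n) (l.drop n) := by
  conv at h => rw [← List.take_append_drop n l]
  exact (walkFrom_append.1 h).2

lemma WalkFrom.transGen {u : V} {l : List (Arc V)} (h : N.WalkFrom u l) (hne : l ≠ []) :
    Relation.TransGen N.ArcRel u (endOf u l) := by
  induction l generalizing u with
  | nil => exact absurd rfl hne
  | cons a t ih =>
    rw [walkFrom_cons] at h
    obtain ⟨h1, _, hok, hw⟩ := h
    have har : N.ArcRel u a.2.1 := by
      show 0 < N.arcs u a.2.1
      rw [← h1]
      exact lt_of_le_of_lt (Nat.zero_le _) hok.2.2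
    cases t with
    | nil => rw [endOf_cons, endOf_nil]; exact Relation.TransGen.single har
    | cons b t' =>
      rw [endOf_cons]
      exact Relation.TransGen.head har (ih hw (by simp))

lemma no_repeat (hac : N.Acyclic) {u : V} {l : List (Arc V)} (hw : N.WalkFrom u l)
    {i j : ℕ} (hij : i < j) (hj : j ≤ l.length) : vertAt u l i ≠ vertAt u l j := by
  intro he
  have h1 : N.WalkFrom u (l.take j) := hw.take j
  have h2 : N.WalkFrom (vertAt u (l.take j) i) ((l.take j).drop i) := h1.drop' i
  have hvi : vertAt u (l.take j) i = vertAt u l i := vertAt_take u l (le_of_lt hij)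
  have hlen : ((l.take j).drop i).length = j - i := by
    simp [List.length_take, min_eq_left hj]
  have hne : (l.take j).drop i ≠ [] := by
    intro hnil
    rw [hnil] at hlen
    simp at hlen
    omega
  have hend : endOf (vertAt u (l.take j) i) ((l.take j).drop i) = vertAt u l j := by
    have : endOf u (l.take j) = vertAt u l j := rfl
    rw [← this]
    conv_rhs => rw [← List.take_append_drop i (l.take j)]
    rw [endOf_append]
    rfl
  have := h2.transGen hne
  rw [hend, hvi, he] at this
  exact hac _ this

lemma Reaches.refl' {u : V} (h : u ∈ N.verts) : N.Reaches u u :=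
  ⟨[], walkFrom_nil.2 h, rfl⟩

lemma Reaches.arc {u v w : V} (h : N.Reaches u v) (ha : 0 < N.arcs v w)
    (hwv : w ∈ N.verts) : N.Reaches u w := by
  obtain ⟨l, hl, hend⟩ := h
  have hv : v ∈ N.verts := hend ▸ hl.endMem
  refine ⟨l ++ [(v, w, 0)], ?_, ?_⟩
  · rw [walkFrom_append, hend]
    exact ⟨hl, walkFrom_cons.2 ⟨rfl, hv, ⟨hv, hwv, ha⟩, walkFrom_nil.2 hwv⟩⟩
  · rw [endOf_append, hend]; rfl

end Net

/-! ### finsum helpers -/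

section Finsum

variable {ι : Type*}

lemma le_finsum_of_mem {f : ι → ℕ} {s : Set ι} (hs : s.Finite)
    (hsupp : ∀ i, f i ≠ 0 → i ∈ s) (a : ι) : f a ≤ ∑ᶠ i, f i := by
  have hsub : Function.support f ⊆ ↑hs.toFinset := by
    intro i hi
    simp only [Set.Finite.coe_toFinset]
    exact hsupp i hi
  rw [finsum_eq_sum_of_support_subset f hsub]
  by_cases ha : f a = 0
  · simp [ha]
  · exact Finset.single_le_sum (fun i _ => Nat.zero_le _)
      (by simp only [Set.Finite.mem_toFinset]; exact hsupp a ha)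

lemma pair_le_finsum {f : ι → ℕ} {s : Set ι} (hs : s.Finite)
    (hsupp : ∀ i, f i ≠ 0 → i ∈ s) {a b : ι} (hab : a ≠ b) :
    f a + f b ≤ ∑ᶠ i, f i := by
  by_cases ha : f a = 0
  · simpa [ha] using le_finsum_of_mem hs hsupp b
  by_cases hb : f b = 0
  · simpa [hb] using le_finsum_of_mem hs hsupp a
  have hsub : Function.support f ⊆ ↑hs.toFinset := by
    intro i hi
    simp only [Set.Finite.coe_toFinset]
    exact hsupp i hi
  rw [finsum_eq_sum_of_support_subset f hsub]
  have hpair : ({a, b} : Finset ι) ⊆ hs.toFinset := by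
    intro i hi
    simp only [Finset.mem_insert, Finset.mem_singleton] at hi
    rcases hi with rfl | rfl
    · simp only [Set.Finite.mem_toFinset]; exact hsupp _ ha
    · simp only [Set.Finite.mem_toFinset]; exact hsupp _ hb
  calc f a + f b = ∑ i ∈ ({a, b} : Finset ι), f i := (Finset.sum_pair hab).symm
    _ ≤ _ := Finset.sum_le_sum_of_subset hpair

end Finsum

/-! ### MulIso is an equivalence -/

namespace LNet

lemma MulIso.trans {V₁ : Type*} {V₂ : Type*} {V₃ : Type*} {L : Type v}
    {M₁ : LNet V₁ L} {M₂ : LNet V₂ L} {M₃ : LNet V₃ L}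
    (h : MulIso M₁ M₂) (h' : MulIso M₂ M₃) : MulIso M₁ M₃ := by
  obtain ⟨η, hb, ha, hr, hl⟩ := h
  obtain ⟨η', hb', ha', hr', hl'⟩ := h'
  refine ⟨η' ∘ η, hb'.comp hb, ?_, ?_, ?_⟩
  · intro u hu w hw
    rw [Function.comp_apply, Function.comp_apply, ha' _ (hb.1 hu) _ (hb.1 hw), ha _ hu _ hw]
  · rw [Function.comp_apply, hr, hr']
  · intro x
    rw [Set.image_comp, hl x, hl' x]

lemma MulIso.symm' {V₁ : Type*} {V₂ : Type*} {L : Type v} [Nonempty V₁]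
    {M₁ : LNet V₁ L} {M₂ : LNet V₂ L} (hroot : M₁.root ∈ M₁.verts)
    (h : MulIso M₁ M₂) : MulIso M₂ M₁ := by
  obtain ⟨η, hb, ha, hr, hl⟩ := h
  have hinv := hb.invOn_invFunOn
  set ι := Function.invFunOn η M₁.verts with hι
  refine ⟨ι, Set.BijOn.symm hinv.symm hb, ?_, ?_, ?_⟩
  · intro u hu w hw
    have hu' : ι u ∈ M₁.verts := (Set.BijOn.symm hinv.symm hb).1 hu
    have hw' : ι w ∈ M₁.verts := (Set.BijOn.symm hinv.symm hb).1 hw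
    rw [← ha _ hu' _ hw', hinv.2 hu, hinv.2 hw]
  · rw [← hr]; exact hinv.1 hroot
  · intro x
    rw [← hl x]
    ext z
    constructor
    · rintro ⟨_, ⟨w, hw, rfl⟩, rfl⟩
      rw [hinv.1 hw.2]; exact hw
    · intro hz
      exact ⟨η z, ⟨z, hz, rfl⟩, hinv.1 hz.2⟩

lemma eqClass_eq_of_mulIso {V₁ : Type*} {L : Type v} [Nonempty V₁] {M : LNet V₁ L} {p q : V₁}
    (hp : p ∈ M.verts) (hq : q ∈ M.verts)
    (hiso : LNet.MulIso (M.subAt p) (M.subAt q)) : M.eqClass p = M.eqClass q := by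
  have hrp : (M.subAt p).root ∈ (M.subAt p).verts := Net.Reaches.refl' hp
  have hsymm := MulIso.symm' hrp hiso
  ext u
  simp only [LNet.eqClass, Set.mem_setOf_eq, LNet.Sim]
  constructor
  · rintro ⟨hu, rfl | hup⟩
    · exact ⟨hu, Or.inr hiso⟩
    · exact ⟨hu, Or.inr (hup.trans hiso)⟩
  · rintro ⟨hu, rfl | huq⟩
    · exact ⟨hu, Or.inr hsymm⟩
    · exact ⟨hu, Or.inr (huq.trans hsymm)⟩

end LNet

/-! ### Structure of the un-fold -/

namespace Net

variable {V : Type u} {N : Net V} {X : Set V}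

lemma unfold_verts_eq : (N.unfoldNet X).verts = N.unfoldVerts := rfl

lemma unfold_root_eq : (N.unfoldNet X).root = ([] : List (Arc V)) := rfl

lemma unfold_arcs_pos {p q : List (Arc V)} :
    0 < (N.unfoldNet X).arcs p q ↔
      p ∈ N.unfoldVerts ∧ q ∈ N.unfoldVerts ∧
        ∃ r, r ≠ [] ∧ q = p ++ r ∧ ∀ a ∈ r.dropLast, N.IsHybrid (a : Arc V).2.1 := by
  show 0 < (if _ ∧ _ ∧ _ then 1 else 0) ↔ _
  split_ifs with h
  · simpa using h
  · simpa using h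

lemma reaches_unfold_prefix {p w : List (Arc V)}
    (h : (N.unfoldNet X).toNet.Reaches p w) :
    p ∈ N.unfoldVerts ∧ w ∈ N.unfoldVerts ∧ p <+: w := by
  obtain ⟨L, hw, hend⟩ := h
  induction L generalizing p with
  | nil =>
    have : p = w := hend
    subst this
    exact ⟨hw.1, hw.1, List.prefix_refl _⟩
  | cons A t ih =>
    rw [walkFrom_cons] at hw
    obtain ⟨hA1, hpv, hok, hw'⟩ := hw
    have hpos : 0 < (N.unfoldNet X).arcs A.1 A.2.1 := lt_of_le_of_lt (Nat.zero_le _) hok.2.2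
    rw [unfold_arcs_pos] at hpos
    obtain ⟨hu, hv, r, hr, hqe, -⟩ := hpos
    rw [endOf_cons] at hend
    obtain ⟨h1, h2, h3⟩ := ih hw' hend
    subst hA1
    exact ⟨hu, h2, List.IsPrefix.trans (hqe ▸ ⟨r, rfl⟩) h3⟩

lemma prefix_reaches {p : List (Arc V)} (hp : p ∈ N.unfoldVerts) :
    ∀ q ∈ N.unfoldVerts, p <+: q → (N.unfoldNet X).toNet.Reaches p q := by
  have main : ∀ n, ∀ q ∈ N.unfoldVerts, q.length = n → p <+: q →
      (N.unfoldNet X).toNet.Reaches p q := by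
    intro n
    induction n using Nat.strong_induction_on with
    | _ n IH =>
      rintro q hq rfl hpre
      rcases eq_or_ne p q with rfl | hne
      · exact Reaches.refl' hp
      obtain ⟨r, rfl⟩ := hpre
      have hr : r ≠ [] := by rintro rfl; simp at hne
      classical
      have hlenlt : p.length < (p ++ r).length := by
        simp only [List.length_append]
        have := List.length_pos_iff.2 hr
        omega
      set P : ℕ → Prop := fun k =>
        p.length ≤ k ∧ k < (p ++ r).length ∧ N.IsTreeVert (vertAt N.root (p ++ r) k) with hP
      set k := Nat.findGreatest P ((p ++ r).length - 1) with hk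
      have hP0 : P p.length := by
        refine ⟨le_refl _, hlenlt, ?_⟩
        have he : vertAt N.root (p ++ r) p.length = endOf N.root p := by
          simp [vertAt, List.take_left]
        rw [he]; exact hp.2
      have hple : p.length ≤ (p ++ r).length - 1 := by omega
      have hkge : p.length ≤ k := Nat.le_findGreatest hple hP0
      have hkP : P k := Nat.findGreatest_spec hple hP0
      have hkle : k ≤ (p ++ r).length - 1 := Nat.findGreatest_le _
      obtain ⟨hk1, hk2, hk3⟩ := hkP
      have htk : (p ++ r).take k ∈ N.unfoldVerts := ⟨hq.1.take k, hk3⟩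
      have hppre : p <+: (p ++ r).take k := by
        have hpt : ((p ++ r).take k).take p.length = p := by
          rw [List.take_take, min_eq_left hk1, List.take_left]
        conv_lhs => rw [← hpt]
        exact List.take_prefix _ _
      have harc : 0 < (N.unfoldNet X).arcs ((p ++ r).take k) (p ++ r) := by
        rw [unfold_arcs_pos]
        refine ⟨htk, hq, (p ++ r).drop k, ?_, (List.take_append_drop k (p ++ r)).symm, ?_⟩
        · intro hnil
          have := congrArg List.length hnil
          simp only [List.length_drop, List.length_nil] at this
          omega
        · intro a ha
          obtain ⟨⟨j, hj⟩, hja⟩ := List.mem_iff_get.1 ha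
          have hjlen : j < (p ++ r).length - k - 1 := by
            simpa [List.length_dropLast, List.length_drop] using hj
          have hkj : k + j < (p ++ r).length := by omega
          have hav : a = (p ++ r).get ⟨k + j, hkj⟩ := by
            rw [← hja]
            simp [List.get_eq_getElem, List.getElem_dropLast, List.getElem_drop]
          have ha21 : a.2.1 = vertAt N.root (p ++ r) (k + j + 1) := by
            rw [vertAt_succ_get N.root hkj, hav]
          have hnotP : ¬ P (k + j + 1) := by
            have hlt : Nat.findGreatest P ((p ++ r).length - 1) < k + j + 1 := by
              rw [← hk]; omega
            exact Nat.findGreatest_is_greatest hlt (by omega)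
          have hmem : vertAt N.root (p ++ r) (k + j + 1) ∈ N.verts :=
            vertAt_mem hq.1 (by omega)
          rw [ha21]
          refine ⟨hmem, ?_⟩
          by_contra hlt
          push_neg at hlt
          exact hnotP ⟨by omega, by omega, hmem, by omega⟩
      have hrec : (N.unfoldNet X).toNet.Reaches p ((p ++ r).take k) := by
        apply IH k (by omega) _ htk _ hppre
        rw [List.length_take]
        omega
      exact hrec.arc harc hq
  intro q hq hpre
  exact main q.length q hq rfl hpre

lemma mem_belowSet_iff {p q : List (Arc V)} (hp : p ∈ N.unfoldVerts) :
    q ∈ (N.unfoldNet X).belowSet p ↔ q ∈ N.unfoldVerts ∧ p <+: q :=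
  ⟨fun h => ⟨(reaches_unfold_prefix h).2.1, (reaches_unfold_prefix h).2.2⟩,
    fun h => prefix_reaches hp q h.1 h.2⟩

lemma append_mem_unfold_iff {p q : List (Arc V)} (hp : p ∈ N.unfoldVerts)
    (hq : q ∈ N.unfoldVerts) (hend : endOf N.root p = endOf N.root q)
    (r : List (Arc V)) : p ++ r ∈ N.unfoldVerts ↔ q ++ r ∈ N.unfoldVerts := by
  show (N.WalkFrom N.root (p ++ r) ∧ _) ↔ (N.WalkFrom N.root (q ++ r) ∧ _)
  rw [walkFrom_append, walkFrom_append, endOf_append, endOf_append, hend]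
  constructor
  · rintro ⟨⟨-, h2⟩, h3⟩; exact ⟨⟨hq.1, h2⟩, h3⟩
  · rintro ⟨⟨-, h2⟩, h3⟩; exact ⟨⟨hp.1, h2⟩, h3⟩

lemma endOf_shift {p q : List (Arc V)} (hend : endOf N.root p = endOf N.root q)
    (r : List (Arc V)) : endOf N.root (p ++ r) = endOf N.root (q ++ r) := by
  rw [endOf_append, endOf_append, hend]

lemma shift_mulIsoVia {p q : List (Arc V)} (hp : p ∈ N.unfoldVerts) (hq : q ∈ N.unfoldVerts)
    (hend : endOf N.root p = endOf N.root q) :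
    LNet.MulIsoVia ((N.unfoldNet X).subAt p) ((N.unfoldNet X).subAt q)
      (fun w => q ++ w.drop p.length) := by
  set M := N.unfoldNet X with hM
  have hbp : ∀ w, w ∈ M.belowSet p ↔ w ∈ N.unfoldVerts ∧ p <+: w := fun w => mem_belowSet_iff hp
  have hbq : ∀ w, w ∈ M.belowSet q ↔ w ∈ N.unfoldVerts ∧ q <+: w := fun w => mem_belowSet_iff hq
  have hmem : ∀ r, p ++ r ∈ N.unfoldVerts ↔ q ++ r ∈ N.unfoldVerts :=
    append_mem_unfold_iff hp hq hend
  have heta : ∀ r : List (Arc V), (p ++ r).drop p.length = r := fun r => List.drop_left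
  have hmapsto : ∀ r, p ++ r ∈ M.belowSet p → q ++ r ∈ M.belowSet q := by
    intro r hw
    exact (hbq _).2 ⟨(hmem r).1 ((hbp _).1 hw).1, ⟨r, rfl⟩⟩
  have harcs : ∀ r₁ r₂, M.arcs (q ++ r₁) (q ++ r₂) = M.arcs (p ++ r₁) (p ++ r₂) := by
    intro r₁ r₂
    show (if _ ∧ _ ∧ _ then 1 else 0) = (if _ ∧ _ ∧ _ then 1 else 0)
    apply if_congr _ rfl rfl
    constructor
    · rintro ⟨h1, h2, s, hs, hqq, hhyb⟩
      refine ⟨(hmem r₁).2 h1, (hmem r₂).2 h2, s, hs, ?_, hhyb⟩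
      rw [List.append_assoc] at hqq ⊢
      rw [List.append_cancel_left_eq] at hqq
      rw [hqq]
    · rintro ⟨h1, h2, s, hs, hqq, hhyb⟩
      refine ⟨(hmem r₁).1 h1, (hmem r₂).1 h2, s, hs, ?_, hhyb⟩
      rw [List.append_assoc] at hqq ⊢
      rw [List.append_cancel_left_eq] at hqq
      rw [hqq]
  refine ⟨⟨?_, ?_, ?_⟩, ?_, ?_, ?_⟩
  · -- mapsTo
    intro w hw
    obtain ⟨hwv, r, rfl⟩ := (hbp w).1 hw
    show q ++ (p ++ r).drop p.length ∈ M.belowSet q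
    rw [heta r]
    exact hmapsto r (by exact hw)
  · -- injOn
    intro w₁ hw₁ w₂ hw₂ heq
    obtain ⟨hv₁, r₁, rfl⟩ := (hbp w₁).1 hw₁
    obtain ⟨hv₂, r₂, rfl⟩ := (hbp w₂).1 hw₂
    simp only [heta] at heq
    rw [List.append_cancel_left_eq] at heq
    rw [heq]
  · -- surjOn
    intro w' hw'
    obtain ⟨hv', r, rfl⟩ := (hbq w').1 hw'
    refine ⟨p ++ r, (hbp _).2 ⟨(hmem r).2 hv', ⟨r, rfl⟩⟩, ?_⟩
    show q ++ (p ++ r).drop p.length = q ++ r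
    rw [heta r]
  · -- arcs
    intro w₁ hw₁ w₂ hw₂
    obtain ⟨hv₁, r₁, rfl⟩ := (hbp w₁).1 hw₁
    obtain ⟨hv₂, r₂, rfl⟩ := (hbp w₂).1 hw₂
    show (M.subAt q).arcs (q ++ (p ++ r₁).drop p.length) (q ++ (p ++ r₂).drop p.length)
      = (M.subAt p).arcs (p ++ r₁) (p ++ r₂)
    rw [heta r₁, heta r₂]
    show (if _ ∧ _ then M.arcs (q ++ r₁) (q ++ r₂) else 0)
      = (if _ ∧ _ then M.arcs (p ++ r₁) (p ++ r₂) else 0)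
    rw [if_pos ⟨hmapsto r₁ hw₁, hmapsto r₂ hw₂⟩, if_pos ⟨hw₁, hw₂⟩]
    exact harcs r₁ r₂
  · -- root
    show q ++ (M.subAt p).root.drop p.length = (M.subAt q).root
    show q ++ p.drop p.length = q
    rw [List.drop_length, List.append_nil]
  · -- labels
    intro x
    have hinter : ∀ (s t : Set (List (Arc V))), (s ∩ t) ∩ t = s ∩ t := by
      intro s t
      rw [Set.inter_assoc, Set.inter_self]
    show (fun w => q ++ w.drop p.length) '' ((M.lab x ∩ M.belowSet p) ∩ M.belowSet p)
      = (M.lab x ∩ M.belowSet q) ∩ M.belowSet q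
    rw [hinter, hinter]
    by_cases hx : x ∈ X
    · have hlab : M.lab x = {w ∈ N.unfoldVerts | endOf N.root w = x} := by
        show (if x ∈ X then _ else ∅) = _
        rw [if_pos hx]
      ext w'
      constructor
      · rintro ⟨w, ⟨hlw, hbw⟩, rfl⟩
        obtain ⟨hwv, r, rfl⟩ := (hbp w).1 hbw
        rw [hlab] at hlw
        show q ++ (p ++ r).drop p.length ∈ _
        rw [heta r]
        refine ⟨?_, hmapsto r hbw⟩
        rw [hlab]
        exact ⟨(hmem r).1 hwv, by rw [← endOf_shift hend r]; exact hlw.2⟩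
      · rintro ⟨hlw, hbw⟩
        obtain ⟨hv', r, rfl⟩ := (hbq _).1 hbw
        rw [hlab] at hlw
        refine ⟨p ++ r, ⟨?_, (hbp _).2 ⟨(hmem r).2 hv', ⟨r, rfl⟩⟩⟩, ?_⟩
        · rw [hlab]
          exact ⟨(hmem r).2 hv', by rw [endOf_shift hend r]; exact hlw.2⟩
        · show q ++ (p ++ r).drop p.length = q ++ r
          rw [heta r]
      
    · have hlab : M.lab x = ∅ := by
        show (if x ∈ X then _ else ∅) = ∅
        rw [if_neg hx]
      rw [hlab]
      simp

lemma shift_mulIso {p q : List (Arc V)} (hp : p ∈ N.unfoldVerts) (hq : q ∈ N.unfoldVerts)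
    (hend : endOf N.root p = endOf N.root q) :
    LNet.MulIso ((N.unfoldNet X).subAt p) ((N.unfoldNet X).subAt q) :=
  ⟨_, shift_mulIsoVia hp hq hend⟩

lemma eqClass_eq_of_end_eq {p q : List (Arc V)} (hp : p ∈ N.unfoldVerts)
    (hq : q ∈ N.unfoldVerts) (hend : endOf N.root p = endOf N.root q) :
    (N.unfoldNet X).eqClass p = (N.unfoldNet X).eqClass q :=
  LNet.eqClass_eq_of_mulIso hp hq (shift_mulIso hp hq hend)

end Net

/-! ### The fold-up and stability -/

namespace LNet

lemma fold_arcs_mem {W : Type*} {L : Type v} (M : LNet W L) :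
    ∀ a b, M.foldUp.arcs a b ≠ 0 → a ∈ M.foldUp.verts ∧ b ∈ M.foldUp.verts := by
  intro a b h
  cases a with
  | inl d =>
    cases b with
    | inl c =>
      by_cases hcond : M.IsClassOf d ∧ M.IsClassOf c ∧ ¬ M.ClassHyb c ∧ M.IsParentClassOf d c
      · exact ⟨Or.inl ⟨d, hcond.1, rfl⟩, Or.inl ⟨c, hcond.2.1, rfl⟩⟩
      · exfalso; apply h
        show (if _ then _ else 0) = 0
        rw [if_neg hcond]
    | inr c =>
      by_cases hcond : M.IsClassOf d ∧ M.IsClassOf c ∧ M.ClassHyb c ∧ M.IsParentClassOf d c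
      · exact ⟨Or.inl ⟨d, hcond.1, rfl⟩, Or.inr ⟨c, ⟨hcond.2.1, hcond.2.2.1⟩, rfl⟩⟩
      · exfalso; apply h
        show (if _ then _ else 0) = 0
        rw [if_neg hcond]
  | inr c =>
    cases b with
    | inl c' =>
      by_cases hcond : c' = c ∧ M.IsClassOf c ∧ M.ClassHyb c
      · obtain ⟨rfl, h1, h2⟩ := hcond
        exact ⟨Or.inr ⟨c', ⟨h1, h2⟩, rfl⟩, Or.inl ⟨c', h1, rfl⟩⟩
      · exfalso; apply h
        show (if _ then _ else 0) = 0
        rw [if_neg hcond]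
    | inr c' => exact absurd rfl h

lemma fold_outDeg_inr {W : Type*} {L : Type v} (M : LNet W L) {c : Set W}
    (h1 : M.IsClassOf c) (h2 : M.ClassHyb c) :
    M.foldUp.outDeg (Sum.inr c) = 1 := by
  have key : ∀ b, b ≠ Sum.inl c → M.foldUp.arcs (Sum.inr c) b = 0 := by
    intro b hb
    cases b with
    | inl c' =>
      show (if c' = c ∧ _ ∧ _ then _ else 0) = 0
      rw [if_neg]
      rintro ⟨rfl, -, -⟩
      exact hb rfl
    | inr c' => rfl
  show (∑ᶠ b, M.foldUp.arcs (Sum.inr c) b) = 1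
  rw [finsum_eq_single _ (Sum.inl c) key]
  show (if c = c ∧ M.IsClassOf c ∧ M.ClassHyb c then 1 else 0) = 1
  rw [if_pos ⟨rfl, h1, h2⟩]

end LNet

namespace Net

lemma iso_outDeg {V : Type u} {W : Type w} {N : Net V} {F : Net W}
    (hfin : N.verts.Finite)
    (harc : ∀ u v, N.arcs u v ≠ 0 → u ∈ N.verts ∧ v ∈ N.verts)
    (hFarc : ∀ a b, F.arcs a b ≠ 0 → a ∈ F.verts ∧ b ∈ F.verts)
    {g : V → W} (hg : NetIsoVia N F g) {v : V} (hv : v ∈ N.verts) :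
    F.outDeg (g v) = N.outDeg v := by
  classical
  have himg : F.verts = g '' N.verts := hg.1.image_eq.symm
  have hFfin : F.verts.Finite := by rw [himg]; exact hfin.image g
  have h1 : Function.support (fun b => F.arcs (g v) b) ⊆ ↑hFfin.toFinset := by
    intro b hb
    simp only [Set.Finite.coe_toFinset]
    exact (hFarc _ _ hb).2
  have h2 : Function.support (fun u => N.arcs v u) ⊆ ↑hfin.toFinset := by
    intro u hu
    simp only [Set.Finite.coe_toFinset]
    exact (harc _ _ hu).2
  simp only [Net.outDeg]
  rw [finsum_eq_sum_of_support_subset _ h1, finsum_eq_sum_of_support_subset _ h2]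
  have hset : hFfin.toFinset = hfin.toFinset.image g := by
    ext b
    simp only [Set.Finite.mem_toFinset, Finset.mem_image, Set.Finite.mem_toFinset]
    rw [himg]
    constructor
    · rintro ⟨u, hu, rfl⟩; exact ⟨u, hu, rfl⟩
    · rintro ⟨u, hu, rfl⟩; exact ⟨u, hu, rfl⟩
  rw [hset, Finset.sum_image (by
    intro x hx y hy hxy
    exact hg.1.2.1 (by simpa using hx) (by simpa using hy) hxy)]
  apply Finset.sum_congr rfl
  intro u hu
  exact hg.2.1 v hv u (by simpa using hu)

/-- In a stable network, two paths of `π⁻(N)` with isomorphic subMUL-trees of the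
un-fold below them end at the same (tree) vertex. -/
lemma stable_end_eq {V : Type u} {N : Net V} {X : Set V} (h : IsStable N X)
    {p q : List (Arc V)} (hp : p ∈ N.unfoldVerts) (hq : q ∈ N.unfoldVerts)
    (hiso : LNet.MulIso ((N.unfoldNet X).subAt p) ((N.unfoldNet X).subAt q)) :
    Net.endOf N.root p = Net.endOf N.root q := by
  classical
  obtain ⟨hphylo, g, hg, -⟩ := h
  haveI : Nonempty V := ⟨N.root⟩
  set M := N.unfoldNet X with hM
  have hDAG := hphylo.toIsXNetwork.toIsPseudoDAG
  have hfin : N.verts.Finite := hDAG.finite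
  set T : Set V := {v | N.IsTreeVert v} with hT
  set H : Set V := {v | N.IsHybrid v} with hH
  set C : Set (Set (List (Arc V))) := {c | M.IsClassOf c} with hC
  set Ch : Set (Set (List (Arc V))) := {c | M.IsClassOf c ∧ M.ClassHyb c} with hCh
  set pathTo : V → List (Arc V) :=
    fun t => Classical.epsilon (fun r => r ∈ N.unfoldVerts ∧ Net.endOf N.root r = t)
    with hpathTo
  have pathTo_spec : ∀ t ∈ T, pathTo t ∈ N.unfoldVerts ∧ Net.endOf N.root (pathTo t) = t := by
    intro t ht
    apply Classical.epsilon_spec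
      (p := fun r => r ∈ N.unfoldVerts ∧ Net.endOf N.root r = t)
    obtain ⟨l, hl, he⟩ := hDAG.connected t ht.1
    exact ⟨l, ⟨⟨hl, by rw [he]; exact ht⟩, he⟩⟩
  set φ : V → Set (List (Arc V)) := fun t => M.eqClass (pathTo t) with hφ
  have φ_eq : ∀ r ∈ N.unfoldVerts, φ (Net.endOf N.root r) = M.eqClass r := by
    intro r hr
    have ht : Net.endOf N.root r ∈ T := hr.2
    obtain ⟨h1, h2⟩ := pathTo_spec _ ht
    exact eqClass_eq_of_end_eq h1 hr h2
  have hTH : T ∪ H = N.verts := by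
    ext v
    constructor
    · rintro (hv | hv); exacts [hv.1, hv.1]
    · intro hv
      rcases le_or_gt (N.inDeg v) 1 with h' | h'
      · exact Or.inl ⟨hv, h'⟩
      · exact Or.inr ⟨hv, h'⟩
  have hTHdisj : Disjoint T H := by
    rw [Set.disjoint_left]
    rintro v ⟨-, h1⟩ ⟨-, h2⟩
    omega
  have hTfin : T.Finite := hfin.subset fun v hv => hv.1
  have hHfin : H.Finite := hfin.subset fun v hv => hv.1
  have hFverts : M.foldUp.verts = Sum.inl '' C ∪ Sum.inr '' Ch := rfl
  have himg : M.foldUp.verts = g '' N.verts := hg.1.image_eq.symm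
  have hFfin : M.foldUp.verts.Finite := by rw [himg]; exact hfin.image g
  have hCfin : C.Finite := by
    have h1 : (Sum.inl '' C : Set (Set (List (Arc V)) ⊕ Set (List (Arc V)))).Finite :=
      hFfin.subset (by rw [hFverts]; exact Set.subset_union_left)
    exact Set.Finite.of_finite_image h1 Sum.inl_injective.injOn
  have hChfin : Ch.Finite := by
    have h1 : (Sum.inr '' Ch : Set (Set (List (Arc V)) ⊕ Set (List (Arc V)))).Finite :=
      hFfin.subset (by rw [hFverts]; exact Set.subset_union_right)
    exact Set.Finite.of_finite_image h1 Sum.inr_injective.injOn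
  have hcard1 : N.verts.ncard = C.ncard + Ch.ncard := by
    have he : M.foldUp.verts.ncard = N.verts.ncard := by
      rw [himg]
      exact Set.ncard_image_of_injOn hg.1.2.1
    rw [← he, hFverts, Set.ncard_union_eq ?hdisj (hCfin.image _) (hChfin.image _),
      Set.ncard_image_of_injective _ Sum.inl_injective,
      Set.ncard_image_of_injective _ Sum.inr_injective]
    case hdisj =>
      rw [Set.disjoint_left]
      rintro x ⟨c, -, rfl⟩ ⟨c', -, hcc⟩
      exact Sum.inl_ne_inr hcc.symm
  have hcard2 : N.verts.ncard = T.ncard + H.ncard := by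
    rw [← hTH, Set.ncard_union_eq hTHdisj hTfin hHfin]
  have houtpres : ∀ v ∈ N.verts, M.foldUp.outDeg (g v) = N.outDeg v := fun v hv =>
    iso_outDeg hfin hDAG.arcMem (LNet.fold_arcs_mem M) hg hv
  have hChH : Ch.ncard ≤ H.ncard := by
    set ψ : Set (List (Arc V)) → V :=
      fun c => Classical.epsilon (fun v => v ∈ N.verts ∧ g v = Sum.inr c) with hψ
    have ψ_spec : ∀ c ∈ Ch, ψ c ∈ N.verts ∧ g (ψ c) = Sum.inr c := by
      intro c hc
      apply Classical.epsilon_spec (p := fun v => v ∈ N.verts ∧ g v = Sum.inr c)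
      have hmem : Sum.inr c ∈ M.foldUp.verts := Or.inr ⟨c, hc, rfl⟩
      rw [himg] at hmem
      obtain ⟨v, hv, hgv⟩ := hmem
      exact ⟨v, hv, hgv⟩
    apply Set.ncard_le_ncard_of_injOn ψ ?_ ?_ hHfin
    · intro c hc
      obtain ⟨hv, hgv⟩ := ψ_spec c hc
      have hout : N.outDeg (ψ c) = 1 := by
        rw [← houtpres _ hv, hgv]
        exact LNet.fold_outDeg_inr M hc.1 hc.2
      refine ⟨hv, ?_⟩
      by_contra hlt
      push_neg at hlt
      have h2 := hphylo.toIsXNetwork.treeOutDeg _ hv (by omega) (by omega)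
      omega
    · intro c₁ h₁ c₂ h₂ he
      have hee : (Sum.inr c₁ : Set (List (Arc V)) ⊕ Set (List (Arc V))) = Sum.inr c₂ := by
        rw [← (ψ_spec c₁ h₁).2, ← (ψ_spec c₂ h₂).2, he]
      exact Sum.inr_injective hee
  have hsurj : C ⊆ φ '' T := by
    rintro c ⟨w, hw, rfl⟩
    have hwv : w ∈ N.unfoldVerts := hw
    exact ⟨Net.endOf N.root w, hwv.2, φ_eq w hwv⟩
  have hCT : C.ncard ≤ T.ncard :=
    le_trans (Set.ncard_le_ncard hsurj (hTfin.image φ)) (Set.ncard_image_le hTfin)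
  have hinj : Set.InjOn φ T := by
    intro t₁ ht₁ t₂ ht₂ hφeq
    by_contra hne
    have hsub2 : C ⊆ φ '' (T \ {t₂}) := by
      intro c hc
      obtain ⟨t, ht, rfl⟩ := hsurj hc
      rcases eq_or_ne t t₂ with rfl | htne
      · exact ⟨t₁, ⟨ht₁, by simp [hne]⟩, hφeq⟩
      · exact ⟨t, ⟨ht, by simp [htne]⟩, rfl⟩
    have hd1 : C.ncard ≤ (T \ {t₂}).ncard :=
      le_trans (Set.ncard_le_ncard hsub2 ((hTfin.subset Set.diff_subset).image φ))
        (Set.ncard_image_le (hTfin.subset Set.diff_subset))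
    have hd2 : (T \ {t₂}).ncard < T.ncard := Set.ncard_diff_singleton_lt_of_mem ht₂ hTfin
    omega
  have e1 : φ (Net.endOf N.root p) = φ (Net.endOf N.root q) := by
    rw [φ_eq p hp, φ_eq q hq]
    exact LNet.eqClass_eq_of_mulIso hp hq hiso
  exact hinj hp.2 hq.2 e1

end Net

/-! ### Hybrid runs, reticulation cycles -/

namespace Net

variable {V : Type u} {N : Net V} {X : Set V}

lemma vertAt_cons (u : V) (a : Arc V) (l : List (Arc V)) (i : ℕ) :
    vertAt u (a :: l) (i + 1) = vertAt a.2.1 l i := by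
  simp [vertAt, List.take_succ_cons, endOf_cons]

/-- The continuation of a walk through hybrid vertices until the first tree vertex
is unique. -/
lemma run_unique (hphylo : N.IsPhyloNetwork X) :
    ∀ (l₁ : List (Arc V)) (e : V) (l₂ : List (Arc V)),
      N.WalkFrom e l₁ → N.WalkFrom e l₂ →
      (∀ i < l₁.length, N.IsHybrid (vertAt e l₁ i)) →
      (∀ i < l₂.length, N.IsHybrid (vertAt e l₂ i)) →
      N.IsTreeVert (endOf e l₁) → N.IsTreeVert (endOf e l₂) → l₁ = l₂ := by
  intro l₁
  induction l₁ with
  | nil =>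
    intro e l₂ hw₁ hw₂ hh₁ hh₂ ht₁ ht₂
    cases l₂ with
    | nil => rfl
    | cons a t =>
      exfalso
      have h1 := (hh₂ 0 (by simp)).2
      rw [vertAt_zero] at h1
      have h2 := ht₁.2
      rw [endOf_nil] at h2
      omega
  | cons a t ih =>
    intro e l₂ hw₁ hw₂ hh₁ hh₂ ht₁ ht₂
    have hhe : N.IsHybrid e := hh₁ 0 (by simp)
    cases l₂ with
    | nil =>
      exfalso
      have h1 := hhe.2
      have h2 := ht₂.2
      rw [endOf_nil] at h2
      omega
    | cons b t₂ =>
      rw [walkFrom_cons] at hw₁ hw₂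
      obtain ⟨ha1, hev, hoka, hwa⟩ := hw₁
      obtain ⟨hb1, -, hokb, hwb⟩ := hw₂
      have hfin : N.verts.Finite := hphylo.toIsXNetwork.toIsPseudoDAG.finite
      have hout : N.outDeg e = 1 := hphylo.toIsXNetwork.hybridOutDeg e hev hhe.2
      have hsupp : ∀ u, N.arcs e u ≠ 0 → u ∈ N.verts := fun u hu =>
        (hphylo.toIsXNetwork.toIsPseudoDAG.arcMem e u hu).2
      have houts : (∑ᶠ u, N.arcs e u) = 1 := hout
      have hone : ∀ u, N.arcs e u ≤ 1 := by
        intro u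
        have h1 : N.arcs e u ≤ ∑ᶠ u, N.arcs e u := le_finsum_of_mem hfin hsupp u
        omega
      have hapos : 0 < N.arcs e a.2.1 := by
        have := hoka.2.2
        rw [ha1] at this
        omega
      have hbpos : 0 < N.arcs e b.2.1 := by
        have := hokb.2.2
        rw [hb1] at this
        omega
      have hsame : a.2.1 = b.2.1 := by
        by_contra hne
        have h2 : N.arcs e a.2.1 + N.arcs e b.2.1 ≤ ∑ᶠ u, N.arcs e u :=
          pair_le_finsum hfin hsupp hne
        omega
      have hai : a.2.2 = 0 := by
        have h1 := hoka.2.2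
        rw [ha1] at h1
        have := hone a.2.1
        omega
      have hbi : b.2.2 = 0 := by
        have h1 := hokb.2.2
        rw [hb1] at h1
        have := hone b.2.1
        omega
      have hab : a = b := by
        refine Prod.ext (ha1.trans hb1.symm) (Prod.ext hsame ?_)
        rw [hai, hbi]
      subst hab
      have htt : t = t₂ := by
        apply ih a.2.1 t₂ hwa hwb
        · intro i hi
          have := hh₁ (i + 1) (by simpa using Nat.succ_lt_succ hi)
          rwa [vertAt_cons] at this
        · intro i hi
          have := hh₂ (i + 1) (by simpa using Nat.succ_lt_succ hi)
          rwa [vertAt_cons] at this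
        · rwa [endOf_cons] at ht₁
        · rwa [endOf_cons] at ht₂
      rw [htt]

lemma same_head_eq (hac : N.Acyclic) {u : V} {l : List (Arc V)} (hw : N.WalkFrom u l)
    {α β : Arc V} (hα : α ∈ l) (hβ : β ∈ l) (he : α.2.1 = β.2.1) : α = β := by
  obtain ⟨⟨i, hi⟩, rfl⟩ := List.mem_iff_get.1 hα
  obtain ⟨⟨j, hj⟩, rfl⟩ := List.mem_iff_get.1 hβ
  rcases lt_trichotomy i j with hij | rfl | hij
  · exfalso
    apply no_repeat hac hw (i := i + 1) (j := j + 1) (by omega) (by omega)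
    rw [vertAt_succ_get u hi, vertAt_succ_get u hj, he]
  · rfl
  · exfalso
    apply no_repeat hac hw (i := j + 1) (j := i + 1) (by omega) (by omega)
    rw [vertAt_succ_get u hi, vertAt_succ_get u hj, he]

/-- Forward direction: a reticulation cycle inside `P₁ ∪ P₂` yields distinct isomorphic
subMUL-trees of the un-fold containing `Ψ(P₁)` and `Ψ(P₂)`. -/
lemma retCycle_to_subtrees (hphylo : N.IsPhyloNetwork X)
    {P₁ P₂ : List (Arc V)} (h₁ : P₁ ∈ N.unfoldVerts) (h₂ : P₂ ∈ N.unfoldVerts)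
    (hrc : N.ContainsRetCycle P₁ P₂) :
    ∃ a b, a ∈ N.unfoldVerts ∧ b ∈ N.unfoldVerts ∧ a ≠ b ∧
      a ≠ ([] : List (Arc V)) ∧ b ≠ ([] : List (Arc V)) ∧
      LNet.MulIso ((N.unfoldNet X).subAt a) ((N.unfoldNet X).subAt b) ∧
      P₁ ∈ (N.unfoldNet X).belowSet a ∧ P₂ ∈ (N.unfoldNet X).belowSet b := by
  classical
  have hac : N.Acyclic := hphylo.toIsXNetwork.toIsPseudoDAG.acyclic
  have hfin : N.verts.Finite := hphylo.toIsXNetwork.toIsPseudoDAG.finite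
  obtain ⟨q₁, q₂, s, e, hw₁, hw₂, hn₁, hn₂, he₁, he₂, hdisj, hsub⟩ := hrc
  have hlen₁ : 0 < q₁.length := List.length_pos_iff.2 hn₁
  have hlen₂ : 0 < q₂.length := List.length_pos_iff.2 hn₂
  set β₁ := q₁.get ⟨q₁.length - 1, by omega⟩ with hβ₁
  set β₂ := q₂.get ⟨q₂.length - 1, by omega⟩ with hβ₂
  have hβ₁head : β₁.2.1 = e := by
    have e1 : endOf s q₁ = vertAt s q₁ ((q₁.length - 1) + 1) :=
      (vertAt_of_length_le s q₁ (by omega)).symm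
    have e2 : vertAt s q₁ ((q₁.length - 1) + 1) = β₁.2.1 := vertAt_succ_get s (by omega)
    rw [← he₁, e1, e2]
  have hβ₂head : β₂.2.1 = e := by
    have e1 : endOf s q₂ = vertAt s q₂ ((q₂.length - 1) + 1) :=
      (vertAt_of_length_le s q₂ (by omega)).symm
    have e2 : vertAt s q₂ ((q₂.length - 1) + 1) = β₂.2.1 := vertAt_succ_get s (by omega)
    rw [← he₂, e1, e2]
  have hβ₁mem : β₁ ∈ arcsOf q₁ := List.get_mem _ _
  have hβ₂mem : β₂ ∈ arcsOf q₂ := List.get_mem _ _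
  have hβne : β₁ ≠ β₂ := by
    intro heq
    exact Set.disjoint_left.1 hdisj hβ₁mem (heq ▸ hβ₂mem)
  have hkey : ∃ γ₁ γ₂ : Arc V, γ₁ ∈ arcsOf P₁ ∧ γ₂ ∈ arcsOf P₂ ∧ γ₁ ≠ γ₂ ∧
      γ₁.2.1 = e ∧ γ₂.2.1 = e := by
    have m₁ := hsub (Set.mem_union_left _ hβ₁mem)
    have m₂ := hsub (Set.mem_union_right _ hβ₂mem)
    rcases m₁ with m₁ | m₁ <;> rcases m₂ with m₂ | m₂
    · exact absurd (same_head_eq hac h₁.1 m₁ m₂ (hβ₁head.trans hβ₂head.symm)) hβne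
    · exact ⟨β₁, β₂, m₁, m₂, hβne, hβ₁head, hβ₂head⟩
    · exact ⟨β₂, β₁, m₂, m₁, hβne.symm, hβ₂head, hβ₁head⟩
    · exact absurd (same_head_eq hac h₂.1 m₁ m₂ (hβ₁head.trans hβ₂head.symm)) hβne
  obtain ⟨γ₁, γ₂, hγ₁, hγ₂, hγne, hγ₁h, hγ₂h⟩ := hkey
  have hok₁ : N.okArc γ₁ := h₁.1.2.1 γ₁ hγ₁
  have hok₂ : N.okArc γ₂ := h₂.1.2.1 γ₂ hγ₂
  have htails : γ₁.1 ≠ γ₂.1 := by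
    intro hteq
    apply hγne
    have hpar₁ := hphylo.noParallel γ₁.1 γ₁.2.1
    have hpar₂ := hphylo.noParallel γ₂.1 γ₂.2.1
    have hi₁ : γ₁.2.2 = 0 := by have := hok₁.2.2; omega
    have hi₂ : γ₂.2.2 = 0 := by have := hok₂.2.2; omega
    refine Prod.ext hteq (Prod.ext (hγ₁h.trans hγ₂h.symm) ?_)
    rw [hi₁, hi₂]
  have hhyb : N.IsHybrid e := by
    refine ⟨hγ₁h ▸ hok₁.2.1, ?_⟩
    have hp₁ : 0 < N.arcs γ₁.1 e := by
      have := hok₁.2.2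
      rw [hγ₁h] at this
      omega
    have hp₂ : 0 < N.arcs γ₂.1 e := by
      have := hok₂.2.2
      rw [hγ₂h] at this
      omega
    have hps : N.arcs γ₁.1 e + N.arcs γ₂.1 e ≤ ∑ᶠ u, N.arcs u e :=
      pair_le_finsum hfin
        (fun u hu => (hphylo.toIsXNetwork.toIsPseudoDAG.arcMem u e hu).1) htails
    show 2 ≤ ∑ᶠ u, N.arcs u e
    omega
  -- For each path and arc into `e`, build the prefix ending at the first tree
  -- vertex after `e`.
  have build : ∀ (P : List (Arc V)) (γ : Arc V), P ∈ N.unfoldVerts → γ ∈ arcsOf P →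
      γ.2.1 = e → ∃ (x run : List (Arc V)),
        x ≠ [] ∧ x.getLast? = some γ ∧
        N.WalkFrom e run ∧ (∀ i < run.length, N.IsHybrid (vertAt e run i)) ∧
        N.IsTreeVert (endOf e run) ∧
        (x ++ run) ∈ N.unfoldVerts ∧ (x ++ run) <+: P ∧
        endOf N.root (x ++ run) = endOf e run := by
    intro P γ hP hγ hγh
    obtain ⟨⟨i₁, hi₁⟩, hg₁⟩ := List.mem_iff_get.1 hγ
    set k₁ := i₁ + 1 with hk₁
    have hvk₁ : vertAt N.root P k₁ = e := by
      rw [hk₁, vertAt_succ_get _ hi₁, hg₁, hγh]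
    have hk₁le : k₁ ≤ P.length := by omega
    have hk₁len : k₁ < P.length := by
      rcases eq_or_lt_of_le hk₁le with heq | hlt
      · exfalso
        have hte : N.IsTreeVert e := by
          rw [← hvk₁, heq, vertAt_length]
          exact hP.2
        have := hte.2
        have := hhyb.2
        omega
      · exact hlt
    have hex₁ : ∃ m, k₁ < m ∧ m ≤ P.length ∧ N.IsTreeVert (vertAt N.root P m) :=
      ⟨P.length, hk₁len, le_refl _, by rw [vertAt_length]; exact hP.2⟩
    set m₁ := Nat.find hex₁ with hm₁
    obtain ⟨hm₁k, hm₁len, hm₁tree⟩ := Nat.find_spec hex₁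
    have hm₁min : ∀ m, k₁ < m → m < m₁ → ¬ N.IsTreeVert (vertAt N.root P m) := by
      intro m hma hmb htree
      exact Nat.find_min hex₁ hmb ⟨hma, by omega, htree⟩
    set run : List (Arc V) := (P.drop k₁).take (m₁ - k₁) with hrun
    have hrlen : run.length = m₁ - k₁ := by
      rw [hrun]
      simp only [List.length_take, List.length_drop]
      omega
    have hxr : P.take k₁ ++ run = P.take m₁ := by
      rw [hrun]
      have hm : m₁ = k₁ + (m₁ - k₁) := by omega
      conv_rhs => rw [hm, List.take_add]
    have hrw : N.WalkFrom e run := by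
      have h0 := (hP.1.drop' k₁).take (m₁ - k₁)
      rwa [hvk₁] at h0
    have hrvert : ∀ j, j ≤ m₁ - k₁ → vertAt e run j = vertAt N.root P (k₁ + j) := by
      intro j hj
      rw [hrun, vertAt_take _ _ hj, ← hvk₁, vertAt_drop]
    have hrhyb : ∀ j < run.length, N.IsHybrid (vertAt e run j) := by
      intro j hj
      rw [hrlen] at hj
      rw [hrvert j (by omega)]
      rcases Nat.eq_zero_or_pos j with rfl | hjpos
      · rw [Nat.add_zero, hvk₁]; exact hhyb
      · have hmem : vertAt N.root P (k₁ + j) ∈ N.verts := vertAt_mem hP.1 (by omega)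
        refine ⟨hmem, ?_⟩
        by_contra hcon
        push_neg at hcon
        exact hm₁min (k₁ + j) (by omega) (by omega) ⟨hmem, by omega⟩
    have hrend : endOf e run = vertAt N.root P m₁ := by
      have h5 : endOf e run = vertAt e run run.length := (vertAt_length e run).symm
      rw [h5, hrlen, hrvert (m₁ - k₁) (le_refl _)]
      congr 1
      omega
    have hrtree : N.IsTreeVert (endOf e run) := by rw [hrend]; exact hm₁tree
    refine ⟨P.take k₁, run, ?_, ?_, hrw, hrhyb, hrtree, ?_, ?_, ?_⟩
    · intro hnil
      have := congrArg List.length hnil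
      simp only [List.length_take, List.length_nil] at this
      omega
    · have hgel : P[i₁] = γ := by
        rw [← hg₁]
        simp [List.get_eq_getElem]
      have hx : P.take k₁ = P.take i₁ ++ [γ] := by
        rw [hk₁, List.take_succ, List.getElem?_eq_getElem hi₁]
        simp [hgel]
      rw [hx, List.getLast?_concat]
    · rw [hxr]
      exact ⟨hP.1.take m₁, hm₁tree⟩
    · rw [hxr]; exact List.take_prefix _ _
    · rw [hxr]
      show endOf N.root (P.take m₁) = endOf e run
      rw [hrend]; rfl
  obtain ⟨x₁, r₁, hx₁ne, hx₁last, hr₁w, hr₁hyb, hr₁tree, ha_uv, ha_pre, ha_end⟩ :=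
    build P₁ γ₁ h₁ hγ₁ hγ₁h
  obtain ⟨x₂, r₂, hx₂ne, hx₂last, hr₂w, hr₂hyb, hr₂tree, hb_uv, hb_pre, hb_end⟩ :=
    build P₂ γ₂ h₂ hγ₂ hγ₂h
  have hrr : r₁ = r₂ := run_unique hphylo r₁ e r₂ hr₁w hr₂w hr₁hyb hr₂hyb hr₁tree hr₂tree
  subst hrr
  refine ⟨x₁ ++ r₁, x₂ ++ r₁, ha_uv, hb_uv, ?_, ?_, ?_, ?_, ?_, ?_⟩
  · intro heq
    obtain ⟨hx, -⟩ := List.append_inj' heq rfl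
    rw [hx] at hx₁last
    exact hγne (Option.some_injective _ (hx₁last.symm.trans hx₂last))
  · intro hnil
    exact hx₁ne (List.append_eq_nil_iff.1 hnil).1
  · intro hnil
    exact hx₂ne (List.append_eq_nil_iff.1 hnil).1
  · exact shift_mulIso ha_uv hb_uv (ha_end.trans hb_end.symm)
  · exact (mem_belowSet_iff ha_uv).2 ⟨h₁, ha_pre⟩
  · exact (mem_belowSet_iff hb_uv).2 ⟨h₂, hb_pre⟩

lemma no_proper_prefix_same_end (hac : N.Acyclic) {u : V} {x y : List (Arc V)}
    (hwy : N.WalkFrom u y) (hxy : x <+: y) (hne : x ≠ y)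
    (hend : endOf u x = endOf u y) : False := by
  obtain ⟨r, rfl⟩ := hxy
  have hr : r ≠ [] := by rintro rfl; simp at hne
  have hw' := (walkFrom_append.1 hwy).2
  have ht := hw'.transGen hr
  rw [← endOf_append, ← hend] at ht
  exact hac _ ht

/-- Two distinct directed walks with the same start and end contain a
reticulation cycle. -/
lemma diverge_cycle (hac : N.Acyclic) {u : V} {a b : List (Arc V)}
    (hwa : N.WalkFrom u a) (hwb : N.WalkFrom u b) (hne : a ≠ b)
    (hend : endOf u a = endOf u b) : N.ContainsRetCycle a b := by
  classical
  set k := Nat.findGreatest (fun k => a.take k = b.take k) (min a.length b.length) with hk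
  have hspec : a.take k = b.take k := by
    rw [hk]
    exact Nat.findGreatest_spec (P := fun k => a.take k = b.take k) (Nat.zero_le _) rfl
  have hkle : k ≤ min a.length b.length := Nat.findGreatest_le _
  have hklt : k < min a.length b.length := by
    rcases eq_or_lt_of_le hkle with heq | hlt
    · exfalso
      rcases le_total a.length b.length with hab | hab
      · have hmin : min a.length b.length = a.length := min_eq_left hab
        have hxa : a.take k = a := by rw [heq, hmin, List.take_length]
        have hxb : a <+: b := by
          rw [← hxa, hspec]
          exact List.take_prefix _ _
        exact no_proper_prefix_same_end hac hwb hxb hne hend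
      · have hmin : min a.length b.length = b.length := min_eq_right hab
        have hxb : b.take k = b := by rw [heq, hmin, List.take_length]
        have hxa : b <+: a := by
          rw [← hxb, ← hspec]
          exact List.take_prefix _ _
        exact no_proper_prefix_same_end hac hwa hxa (Ne.symm hne) hend.symm
    · exact hlt
  have hka : k < a.length := by omega
  have hkb : k < b.length := by omega
  set s := endOf u (a.take k) with hs
  set r₁ := a.drop k with hr₁
  set r₂ := b.drop k with hr₂
  have hr₁len : r₁.length = a.length - k := by rw [hr₁, List.length_drop]
  have hr₂len : r₂.length = b.length - k := by rw [hr₂, List.length_drop]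
  have hwr₁ : N.WalkFrom s r₁ := hwa.drop' k
  have hwr₂ : N.WalkFrom s r₂ := by
    have h0 := hwb.drop' k
    have hvb : vertAt u b k = s := by
      rw [hs]
      show endOf u (b.take k) = endOf u (a.take k)
      rw [hspec]
    rwa [hvb] at h0
  have e1 : endOf u a = endOf s r₁ := by
    conv_lhs => rw [← List.take_append_drop k a]
    rw [endOf_append, ← hs, ← hr₁]
  have e2 : endOf u b = endOf s r₂ := by
    conv_lhs => rw [← List.take_append_drop k b]
    rw [endOf_append, ← hr₂]
    have : endOf u (b.take k) = s := by rw [hs, hspec]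
    rw [this]
  have hEE : endOf s r₁ = endOf s r₂ := by rw [← e1, ← e2]; exact hend
  have hhd : ∀ (h1 : 0 < r₁.length) (h2 : 0 < r₂.length),
      r₁.get ⟨0, h1⟩ ≠ r₂.get ⟨0, h2⟩ := by
    intro h1 h2 heq
    have hg : a[k]'hka = b[k]'hkb := by
      have e3 : r₁.get ⟨0, h1⟩ = a[k]'hka := by
        simp [hr₁, List.get_eq_getElem, List.getElem_drop]
      have e4 : r₂.get ⟨0, h2⟩ = b[k]'hkb := by
        simp [hr₂, List.get_eq_getElem, List.getElem_drop]
      rw [← e3, ← e4, heq]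
    have htk : a.take (k + 1) = b.take (k + 1) := by
      rw [List.take_succ, List.take_succ, hspec, List.getElem?_eq_getElem hka,
        List.getElem?_eq_getElem hkb, hg]
    have hlt2 : Nat.findGreatest (fun k => a.take k = b.take k)
        (min a.length b.length) < k + 1 := by
      rw [← hk]; omega
    exact Nat.findGreatest_is_greatest hlt2 (by omega) htk
  set P : ℕ → Prop := fun i => 1 ≤ i ∧ i ≤ r₁.length ∧
    ∃ j, 1 ≤ j ∧ j ≤ r₂.length ∧ vertAt s r₂ j = vertAt s r₁ i with hP
  have hPex : ∃ i, P i := by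
    refine ⟨r₁.length, by omega, le_refl _, r₂.length, by omega, le_refl _, ?_⟩
    rw [vertAt_length, vertAt_length, hEE]
  set i₀ := Nat.find hPex with hi₀def
  obtain ⟨hi₀1, hi₀len, j', hj'1, hj'len, hj'eq⟩ := Nat.find_spec hPex
  set v := vertAt s r₁ i₀ with hv
  set Q : ℕ → Prop := fun j => 1 ≤ j ∧ j ≤ r₂.length ∧ vertAt s r₂ j = v with hQ
  have hQex : ∃ j, Q j := ⟨j', hj'1, hj'len, hj'eq⟩
  set j₀ := Nat.find hQex with hj₀def
  obtain ⟨hj₀1, hj₀len, hj₀eq⟩ := Nat.find_spec hQex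
  have hq₁len : (r₁.take i₀).length = i₀ := by
    rw [List.length_take]; omega
  have hq₂len : (r₂.take j₀).length = j₀ := by
    rw [List.length_take]; omega
  refine ⟨r₁.take i₀, r₂.take j₀, s, v, hwr₁.take i₀, hwr₂.take j₀, ?_, ?_, rfl, hj₀eq, ?_, ?_⟩
  · intro hnil
    have := congrArg List.length hnil
    rw [hq₁len] at this
    simp at this
    omega
  · intro hnil
    have := congrArg List.length hnil
    rw [hq₂len] at this
    simp at this
    omega
  · -- arc-disjointness
    rw [Set.disjoint_left]
    intro α hα₁ hα₂
    obtain ⟨⟨p₁, hp₁⟩, hp₁e⟩ := List.mem_iff_get.1 hα₁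
    obtain ⟨⟨p₂, hp₂⟩, hp₂e⟩ := List.mem_iff_get.1 hα₂
    have hp₁i : p₁ < i₀ := by rw [hq₁len] at hp₁; exact hp₁
    have hp₂j : p₂ < j₀ := by rw [hq₂len] at hp₂; exact hp₂
    have hh₁ : α.2.1 = vertAt s r₁ (p₁ + 1) := by
      have t1 := vertAt_succ_get s hp₁
      rw [hp₁e] at t1
      rw [← vertAt_take s r₁ (show p₁ + 1 ≤ i₀ by omega)]
      exact t1.symm
    have hh₂ : α.2.1 = vertAt s r₂ (p₂ + 1) := by
      have t1 := vertAt_succ_get s hp₂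
      rw [hp₂e] at t1
      rw [← vertAt_take s r₂ (show p₂ + 1 ≤ j₀ by omega)]
      exact t1.symm
    have ht₁ : α.1 = vertAt s r₁ p₁ := by
      have t1 := vertAt_get_fst (hwr₁.take i₀) hp₁
      rw [hp₁e] at t1
      rw [← vertAt_take s r₁ (show p₁ ≤ i₀ by omega)]
      exact t1
    have ht₂ : α.1 = vertAt s r₂ p₂ := by
      have t1 := vertAt_get_fst (hwr₂.take j₀) hp₂
      rw [hp₂e] at t1
      rw [← vertAt_take s r₂ (show p₂ ≤ j₀ by omega)]
      exact t1
    have hP1 : P (p₁ + 1) := by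
      refine ⟨by omega, by omega, p₂ + 1, by omega, by omega, ?_⟩
      rw [← hh₂, ← hh₁]
    have hi₀le : i₀ ≤ p₁ + 1 := by
      rw [hi₀def]
      exact Nat.find_min' hPex hP1
    have hp₁eq : p₁ = i₀ - 1 := by omega
    have hα2v : α.2.1 = v := by
      rw [hv, hh₁]
      congr 1
      omega
    have hQ1 : Q (p₂ + 1) := ⟨by omega, by omega, by rw [← hh₂, hα2v]⟩
    have hj₀le : j₀ ≤ p₂ + 1 := by
      rw [hj₀def]
      exact Nat.find_min' hQex hQ1
    have hp₂eq : p₂ = j₀ - 1 := by omega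
    have htt : vertAt s r₁ (i₀ - 1) = vertAt s r₂ (j₀ - 1) := by
      rw [← hp₁eq, ← hp₂eq, ← ht₁, ← ht₂]
    rcases eq_or_lt_of_le hi₀1 with hi1 | hi2
    · rcases eq_or_lt_of_le hj₀1 with hj1 | hj2
      · -- i₀ = 1, j₀ = 1 : the common arc is the first arc of both; contradiction
        have hp₁0 : p₁ = 0 := by omega
        have hp₂0 : p₂ = 0 := by omega
        apply hhd (by omega) (by omega)
        have u1 : (r₁.take i₀).get ⟨p₁, hp₁⟩ = r₁.get ⟨0, by omega⟩ := by
          subst hp₁0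
          simp [List.get_eq_getElem, List.getElem_take]
        have u2 : (r₂.take j₀).get ⟨p₂, hp₂⟩ = r₂.get ⟨0, by omega⟩ := by
          subst hp₂0
          simp [List.get_eq_getElem, List.getElem_take]
        rw [← u1, ← u2, hp₁e, hp₂e]
      · -- i₀ = 1, j₀ ≥ 2 : s is repeated on r₂
        apply no_repeat hac hwr₂ (i := 0) (j := j₀ - 1) (by omega) (by omega)
        rw [vertAt_zero, ← htt]
        have : i₀ - 1 = 0 := by omega
        rw [this, vertAt_zero]
    · rcases eq_or_lt_of_le hj₀1 with hj1 | hj2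
      · -- j₀ = 1, i₀ ≥ 2 : s is repeated on r₁
        apply no_repeat hac hwr₁ (i := 0) (j := i₀ - 1) (by omega) (by omega)
        rw [vertAt_zero, htt]
        have : j₀ - 1 = 0 := by omega
        rw [this, vertAt_zero]
      · -- i₀ ≥ 2, j₀ ≥ 2 : contradicts minimality of i₀
        have hP2 : P (i₀ - 1) := ⟨by omega, by omega, j₀ - 1, by omega, by omega, htt.symm⟩
        have := Nat.find_min hPex (show i₀ - 1 < Nat.find hPex by rw [← hi₀def]; omega)
        exact this hP2
  · -- containment of arcs
    intro α hα
    rcases hα with hα | hα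
    · exact Or.inl ((List.drop_sublist k a).subset ((List.take_sublist i₀ r₁).subset hα))
    · exact Or.inr ((List.drop_sublist k b).subset ((List.take_sublist j₀ r₂).subset hα))

lemma retCycle_mono {P₁ P₂ P₁' P₂' : List (Arc V)} (h : N.ContainsRetCycle P₁ P₂)
    (h1 : arcsOf P₁ ⊆ arcsOf P₁') (h2 : arcsOf P₂ ⊆ arcsOf P₂') :
    N.ContainsRetCycle P₁' P₂' := by
  obtain ⟨q₁, q₂, s, e, a1, a2, a3, a4, a5, a6, a7, a8⟩ := h
  exact ⟨q₁, q₂, s, e, a1, a2, a3, a4, a5, a6, a7,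
    a8.trans (Set.union_subset_union h1 h2)⟩

end Net

/-- Let `N` be a stable phylogenetic network on `X` and let
`P₁, P₂ ∈ π⁻(N)` be distinct.  Then the union of `P₁` and `P₂` contains a
subgraph that is a reticulation cycle of `N` if and only if the vertices
`Ψ_N(P₁)` and `Ψ_N(P₂)` of `U(N)` are contained in two distinct but
isomorphic subMUL-trees of `U(N)`, i.e. there are distinct non-root vertices
`a, b` of `U(N)` such that `U(N)_a ≅ U(N)_b`, `Ψ_N(P₁) ∈ V(U(N)_a)` and
`Ψ_N(P₂) ∈ V(U(N)_b)`. -/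
theorem reticulation_cycle_iff_isomorphic_subtrees {V : Type u} (X : Set V)
    (N : Net V) (hX : 3 ≤ X.ncard) (h : IsStable N X)
    (P₁ P₂ : List (Arc V))
    (h₁ : P₁ ∈ (Net.unfoldNet N X).verts) (h₂ : P₂ ∈ (Net.unfoldNet N X).verts)
    (hne : P₁ ≠ P₂) :
    Net.ContainsRetCycle N P₁ P₂ ↔
      ∃ a b, a ∈ (Net.unfoldNet N X).verts ∧ b ∈ (Net.unfoldNet N X).verts ∧
        a ≠ b ∧ a ≠ (Net.unfoldNet N X).root ∧ b ≠ (Net.unfoldNet N X).root ∧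
        LNet.MulIso ((Net.unfoldNet N X).subAt a) ((Net.unfoldNet N X).subAt b) ∧
        P₁ ∈ (Net.unfoldNet N X).belowSet a ∧ P₂ ∈ (Net.unfoldNet N X).belowSet b := by
  have hphylo := h.1
  have hac : N.Acyclic := hphylo.toIsXNetwork.toIsPseudoDAG.acyclic
  constructor
  · intro hrc
    obtain ⟨a, b, ha, hb, hab, hane, hbne, hiso, hA, hB⟩ :=
      Net.retCycle_to_subtrees hphylo h₁ h₂ hrc
    exact ⟨a, b, ha, hb, hab, hane, hbne, hiso, hA, hB⟩
  · rintro ⟨a, b, ha, hb, hab, har, hbr, hiso, hA, hB⟩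
    have hend := Net.stable_end_eq h ha hb hiso
    have hpre₁ : a <+: P₁ := ((Net.mem_belowSet_iff ha).1 hA).2
    have hpre₂ : b <+: P₂ := ((Net.mem_belowSet_iff hb).1 hB).2
    have hcyc := Net.diverge_cycle hac ha.1 hb.1 hab hend
    exact Net.retCycle_mono hcyc (fun α hα => hpre₁.sublist.subset hα)
      (fun α hα => hpre₂.sublist.subset hα)

end Phylo
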